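/- Hypotheses under which Fermat's symmetric theorem is completed via the intermediate value theorem: let f be continuous on [a,b] with a local maximum at t₀ ∈ (a,b), and suppose γ > 0 satisfies t₀±γ ∈ [a,b], f(t₀) > f(t₀-γ) > f(t₀+γ). Then there exists ρ with 0 < ρ < γ such that f(t₀+ρ) = f(t₀-γ), hence D_{ρ,γ}[f](t₀) = 0. -/
import Mathlib


theorem symm_fermat_ivt_step (a b : ℝ) (hab : a < b) (f : ℝ → ℝ)
    (hf : ContinuousOn f (Set.Icc a b)) (t₀ : ℝ) (ht₀ : t₀ ∈ Set.Ioo a b)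
    (hmax : IsLocalMaxOn f (Set.Icc a b) t₀)
    (γ : ℝ) (hγ : 0 < γ) (h₁ : t₀ + γ ∈ Set.Icc a b) (h₂ : t₀ - γ ∈ Set.Icc a b)
    (h₃ : f (t₀ - γ) < f t₀) (h₄ : f (t₀ + γ) < f (t₀ - γ))
    (h₅ : ∀ x ∈ Set.Icc (0 : ℝ) γ, f (t₀ + x) ≤ f t₀) :
    ∃ ρ : ℝ, 0 < ρ ∧ ρ < γ ∧ f (t₀ + ρ) = f (t₀ - γ) ∧
      (f (t₀ + ρ) - f (t₀ - γ)) / (ρ + γ) = 0 := by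
  obtain ⟨ht₀a, ht₀b⟩ := ht₀
  have hsub : ∀ x ∈ Set.Icc (0 : ℝ) γ, t₀ + x ∈ Set.Icc a b := by
    intro x hx
    exact ⟨by linarith [hx.1], by linarith [hx.2, h₁.2]⟩
  have hg : ContinuousOn (fun x => f (t₀ + x)) (Set.Icc 0 γ) := by
    exact hf.comp (Continuous.continuousOn (by continuity)) hsub
  have hivt := intermediate_value_Icc' (le_of_lt hγ) hg
  have hmem : f (t₀ - γ) ∈ Set.Icc (f (t₀ + γ)) (f (t₀ + (0:ℝ))) := by
    constructor
    · exact le_of_lt h₄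
    · simp only [add_zero]; exact le_of_lt h₃
  obtain ⟨ρ, hρmem, hρeq⟩ := hivt hmem
  simp only [] at hρeq
  refine ⟨ρ, ?_, ?_, hρeq, ?_⟩
  · rcases eq_or_lt_of_le hρmem.1 with h | h
    · exfalso; simp only [← h, add_zero] at hρeq; linarith
    · exact h
  · rcases eq_or_lt_of_le hρmem.2 with h | h
    · exfalso; rw [h] at hρeq; linarith
    · exact h
  · rw [hρeq]; simp
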